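/- Let A ∈ M_n(ℂ) be positive semidefinite and B ∈ M_n(ℂ) Hermitian. If every eigenvalue of AB is 0, then there exists a unitary U ∈ M_n(ℂ) and an integer 0 ≤ s ≤ n such that UAU* = A_1 ⊕ 0 with A_1 ∈ M_s invertible, and UBU* has the block form [[0, X],[X*, B_1]] with the top-left s×s block equal to zero. -/

import Mathlib

open Matrix Kronecker ComplexOrder

noncomputable def svals {ι : Type*} [Fintype ι] [DecidableEq ι]
    (A : Matrix ι ι ℂ) : ι → ℝ :=
  fun i => Real.sqrt ((Matrix.isHermitian_conjTranspose_mul_self A).eigenvalues i)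

noncomputable def kyFan {ι : Type*} [Fintype ι] [DecidableEq ι]
    (k : ℕ) (A : Matrix ι ι ℂ) : ℝ :=
  sSup {x : ℝ | ∃ s : Finset ι, s.card = k ∧ x = ∑ i ∈ s, svals A i}

noncomputable def schattenNorm {ι : Type*} [Fintype ι] [DecidableEq ι]
    (p : ℝ) (A : Matrix ι ι ℂ) : ℝ :=
  (∑ i, svals A i ^ p) ^ (1 / p)

noncomputable def specNorm {ι : Type*} [Fintype ι] [DecidableEq ι]
    (A : Matrix ι ι ℂ) : ℝ :=
  sSup (Set.range (svals A))

/-- A Hermitian matrix whose complex spectrum is `{0}` is zero. -/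
theorem herm_eq_zero_of_spectrum_zero {m : Type*} [Fintype m] [DecidableEq m]
    {H : Matrix m m ℂ} (hH : H.IsHermitian) (h : ∀ μ ∈ spectrum ℂ H, μ = 0) :
    H = 0 := by
  have hev : ∀ i, hH.eigenvalues i = 0 := by
    intro i
    have h1 : algebraMap ℝ ℂ (hH.eigenvalues i) ∈ spectrum ℂ H :=
      spectrum.algebraMap_mem ℂ (hH.eigenvalues_mem_spectrum_real i)
    have := h _ h1
    simpa using this
  have hd : Matrix.diagonal (RCLike.ofReal ∘ hH.eigenvalues) = (0 : Matrix m m ℂ) := by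
    have h2 : (RCLike.ofReal ∘ hH.eigenvalues : m → ℂ) = fun _ => 0 := by
      funext i; simp [hev i]
    rw [h2, Matrix.diagonal_zero]
  rw [hH.spectral_theorem, hd, map_zero]

/-- A nonzero element of the spectrum of `M` lies in the spectrum of
`fromBlocks M K 0 0`. -/
theorem mem_spectrum_fromBlocks_of_mem_spectrum {p q : Type*} [Fintype p] [Fintype q]
    [DecidableEq p] [DecidableEq q] {M : Matrix p p ℂ} (K : Matrix p q ℂ) {μ : ℂ}
    (hμ : μ ≠ 0) (hM : μ ∈ spectrum ℂ M) :
    μ ∈ spectrum ℂ (Matrix.fromBlocks M K 0 (0 : Matrix q q ℂ)) := by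
  rw [spectrum.mem_iff] at hM ⊢
  rw [Matrix.isUnit_iff_isUnit_det, isUnit_iff_ne_zero, not_ne_iff] at hM ⊢
  have hblock : algebraMap ℂ (Matrix (p ⊕ q) (p ⊕ q) ℂ) μ - Matrix.fromBlocks M K 0 0 =
      Matrix.fromBlocks (algebraMap ℂ (Matrix p p ℂ) μ - M) (-K) 0
        (algebraMap ℂ (Matrix q q ℂ) μ) := by
    rw [Algebra.algebraMap_eq_smul_one, Algebra.algebraMap_eq_smul_one (A := Matrix p p ℂ),
      Algebra.algebraMap_eq_smul_one (A := Matrix q q ℂ), ← Matrix.fromBlocks_one,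
      Matrix.fromBlocks_smul, sub_eq_add_neg, Matrix.fromBlocks_neg, Matrix.fromBlocks_add]
    congr 1 <;> simp [sub_eq_add_neg]
  rw [hblock, Matrix.det_fromBlocks_zero₂₁, hM, zero_mul]

/-- If A is PSD, B Hermitian, and all eigenvalues of AB are 0, then A and B
can be put simultaneously into the stated block forms by a unitary similarity. -/
theorem psd_hermitian_nilpotent_block_form (n : ℕ)
    (A B : Matrix (Fin n) (Fin n) ℂ)
    (hA : A.PosSemidef) (hB : B.IsHermitian)
    (h : ∀ μ ∈ spectrum ℂ (A * B), μ = 0) :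
    ∃ s : ℕ, ∃ hs : s ≤ n, ∃ U ∈ Matrix.unitaryGroup (Fin n) ℂ,
      ∃ A₁ : Matrix (Fin s) (Fin s) ℂ, ∃ X : Matrix (Fin s) (Fin (n - s)) ℂ,
        ∃ B₁ : Matrix (Fin (n - s)) (Fin (n - s)) ℂ,
          IsUnit A₁ ∧
          Matrix.reindex (finSumFinEquiv.trans (finCongr (Nat.add_sub_cancel' hs))).symm
              (finSumFinEquiv.trans (finCongr (Nat.add_sub_cancel' hs))).symm
              (U * A * Uᴴ) = Matrix.fromBlocks A₁ 0 0 0 ∧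
          Matrix.reindex (finSumFinEquiv.trans (finCongr (Nat.add_sub_cancel' hs))).symm
              (finSumFinEquiv.trans (finCongr (Nat.add_sub_cancel' hs))).symm
              (U * B * Uᴴ) = Matrix.fromBlocks 0 X Xᴴ B₁ := by
  classical
  have hAh : A.IsHermitian := hA.1
  set ev : Fin n → ℝ := hAh.eigenvalues with hev
  set P : Fin n → Prop := fun i => ev i ≠ 0 with hP
  set s : ℕ := Fintype.card {i // P i} with hscard
  have hs : s ≤ n := by
    rw [hscard]
    simpa using Fintype.card_subtype_le P
  have hcompl : Fintype.card {i // ¬ P i} = n - s := by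
    rw [hscard]
    simpa using Fintype.card_subtype_compl P
  set e₁ : {i // P i} ≃ Fin s := Fintype.equivFinOfCardEq rfl with he₁
  set e₂ : {i // ¬ P i} ≃ Fin (n - s) := Fintype.equivFinOfCardEq hcompl with he₂
  set e : Fin n ≃ Fin s ⊕ Fin (n - s) :=
    (Equiv.sumCompl P).symm.trans (e₁.sumCongr e₂) with he
  set c : Fin s ⊕ Fin (n - s) ≃ Fin n :=
    finSumFinEquiv.trans (finCongr (Nat.add_sub_cancel' hs)) with hc
  set σ : Fin n ≃ Fin n := c.symm.trans e.symm with hσ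
  set W : Matrix (Fin n) (Fin n) ℂ := (hAh.eigenvectorUnitary : Matrix (Fin n) (Fin n) ℂ)
    with hW
  have hWmem := hAh.eigenvectorUnitary.2
  have hWsW : star W * W = 1 := (Unitary.mem_iff.mp hWmem).1
  set U : Matrix (Fin n) (Fin n) ℂ := (star W).submatrix ⇑σ id with hU
  have hUH : Uᴴ = W.submatrix id ⇑σ := by
    rw [hU, Matrix.conjTranspose_submatrix]
    congr 1
    rw [← Matrix.star_eq_conjTranspose, star_star]
  have hmulsub : ∀ (M N' : Matrix (Fin n) (Fin n) ℂ) (f g : Fin n → Fin n),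
      M.submatrix f id * N'.submatrix id g = (M * N').submatrix f g := by
    intro M N' f g
    simpa using Matrix.submatrix_mul_equiv M N' f (Equiv.refl (Fin n)) g
  have hUmem : U ∈ Matrix.unitaryGroup (Fin n) ℂ := by
    rw [Matrix.mem_unitaryGroup_iff, Matrix.star_eq_conjTranspose, hUH, hU, hmulsub, hWsW,
      Matrix.submatrix_one_equiv σ]
  have key : ∀ M : Matrix (Fin n) (Fin n) ℂ,
      U * M * Uᴴ = (star W * M * W).submatrix ⇑σ ⇑σ := by
    intro M
    rw [hUH, hU]
    calc (star W).submatrix ⇑σ id * M * W.submatrix id ⇑σ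
        = ((star W).submatrix ⇑σ id * M.submatrix id id) * W.submatrix id ⇑σ := by
          rw [Matrix.submatrix_id_id]
      _ = (star W * M).submatrix ⇑σ id * W.submatrix id ⇑σ := by rw [hmulsub]
      _ = ((star W * M) * W).submatrix ⇑σ ⇑σ := hmulsub _ _ _ _
  have hdiag : star W * A * W = Matrix.diagonal (RCLike.ofReal ∘ ev) :=
    by have := hAh.conjStarAlgAut_star_eigenvectorUnitary
       rw [Unitary.conjStarAlgAut_star_apply] at this
       exact this
  -- the eigenvalues sorted through e
  have hσc : ∀ i, σ (c i) = e.symm i := by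
    intro i
    rw [hσ]
    simp
  have hinl : ∀ k : Fin s, e.symm (Sum.inl k) = ↑(e₁.symm k) := by
    intro k
    rw [he]
    simp
  have hinr : ∀ k : Fin (n - s), e.symm (Sum.inr k) = ↑(e₂.symm k) := by
    intro k
    rw [he]
    simp
  have hpos : ∀ k : Fin s, 0 < ev (e.symm (Sum.inl k)) := by
    intro k
    have h2 : ev ↑(e₁.symm k) ≠ 0 := (e₁.symm k).2
    rw [hinl k]
    exact lt_of_le_of_ne (hA.eigenvalues_nonneg _) (Ne.symm h2)
  have hzero : ∀ k : Fin (n - s), ev (e.symm (Sum.inr k)) = 0 := by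
    intro k
    have h2 : ¬ (ev ↑(e₂.symm k) ≠ 0) := (e₂.symm k).2
    rw [hinr k]
    exact not_not.mp h2
  set A₁ : Matrix (Fin s) (Fin s) ℂ :=
    Matrix.diagonal (fun k => (RCLike.ofReal (ev (e.symm (Sum.inl k))) : ℂ)) with hA₁
  have hA₁unit : IsUnit A₁ := by
    rw [hA₁, Matrix.isUnit_iff_isUnit_det, Matrix.det_diagonal, isUnit_iff_ne_zero]
    refine Finset.prod_ne_zero_iff.mpr fun k _ => ?_
    simpa using (hpos k).ne'
  have hablock : Matrix.reindex c.symm c.symm (U * A * Uᴴ) = Matrix.fromBlocks A₁ 0 0 0 := by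
    rw [key, hdiag, Matrix.reindex_apply, Equiv.symm_symm, Matrix.submatrix_submatrix]
    have hcomp : ⇑σ ∘ ⇑c = ⇑e.symm := funext fun i => hσc i
    rw [hcomp, Matrix.submatrix_diagonal_equiv]
    have hfun : ((RCLike.ofReal ∘ ev) ∘ ⇑e.symm : Fin s ⊕ Fin (n - s) → ℂ) =
        Sum.elim (fun k => (RCLike.ofReal (ev (e.symm (Sum.inl k))) : ℂ)) (fun _ => 0) := by
      funext i
      cases i with
      | inl k => rfl
      | inr k => simp [hzero k]
    rw [hfun, ← Matrix.fromBlocks_diagonal, hA₁, Matrix.diagonal_zero]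
  -- the transformed B
  set N : Matrix (Fin s ⊕ Fin (n - s)) (Fin s ⊕ Fin (n - s)) ℂ :=
    Matrix.reindex c.symm c.symm (U * B * Uᴴ) with hN
  have hNherm : N.IsHermitian := by
    rw [hN, Matrix.reindex_apply]
    exact (Matrix.isHermitian_mul_mul_conjTranspose U hB).submatrix _
  have hCherm : (N.toBlocks₁₁).IsHermitian := by
    ext i j
    rw [Matrix.conjTranspose_apply]
    conv_rhs => rw [show N.toBlocks₁₁ i j = N (Sum.inl i) (Sum.inl j) from rfl, ← hNherm.eq]
    rfl
  have hY : N.toBlocks₂₁ = (N.toBlocks₁₂)ᴴ := by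
    ext i j
    rw [Matrix.conjTranspose_apply]
    conv_lhs => rw [show N.toBlocks₂₁ i j = N (Sum.inr i) (Sum.inl j) from rfl, ← hNherm.eq]
    rfl
  have hNblocks : N = Matrix.fromBlocks N.toBlocks₁₁ N.toBlocks₁₂ (N.toBlocks₁₂)ᴴ
      N.toBlocks₂₂ := by
    conv_lhs => rw [← N.fromBlocks_toBlocks]
    rw [hY]
  have hmulre : ∀ M N' : Matrix (Fin n) (Fin n) ℂ,
      Matrix.reindex c.symm c.symm (M * N') =
        Matrix.reindex c.symm c.symm M * Matrix.reindex c.symm c.symm N' := by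
    intro M N'
    simp only [Matrix.reindex_apply, Equiv.symm_symm]
    exact (Matrix.submatrix_mul_equiv M N' ⇑c c ⇑c).symm
  have hprodblk : Matrix.reindex c.symm c.symm ((U * A * Uᴴ) * (U * B * Uᴴ)) =
      Matrix.fromBlocks (A₁ * N.toBlocks₁₁) (A₁ * N.toBlocks₁₂) 0 0 := by
    rw [hmulre, hablock, ← hN]
    conv_lhs => rw [hNblocks]
    rw [Matrix.fromBlocks_multiply]
    simp
  have hUHU : Uᴴ * U = 1 := by
    rw [← Matrix.star_eq_conjTranspose]
    exact (Unitary.mem_iff.mp hUmem).1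
  have hprod : (U * A * Uᴴ) * (U * B * Uᴴ) = U * (A * B) * Uᴴ := by
    simp only [mul_assoc]
    rw [← mul_assoc Uᴴ U (B * Uᴴ), hUHU, one_mul]
  have hspec : spectrum ℂ (Matrix.fromBlocks (A₁ * N.toBlocks₁₁) (A₁ * N.toBlocks₁₂) 0
      (0 : Matrix (Fin (n - s)) (Fin (n - s)) ℂ)) = spectrum ℂ (A * B) := by
    rw [← hprodblk]
    calc spectrum ℂ (Matrix.reindex c.symm c.symm ((U * A * Uᴴ) * (U * B * Uᴴ)))
        = spectrum ℂ ((U * A * Uᴴ) * (U * B * Uᴴ)) := by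
          rw [show Matrix.reindex c.symm c.symm ((U * A * Uᴴ) * (U * B * Uᴴ)) =
            Matrix.reindexAlgEquiv ℂ ℂ c.symm ((U * A * Uᴴ) * (U * B * Uᴴ)) from rfl]
          exact AlgEquiv.spectrum_eq _ _
      _ = spectrum ℂ (U * (A * B) * Uᴴ) := by rw [hprod]
      _ = spectrum ℂ (A * B) := by
          have h3 := Unitary.spectrum_star_right_conjugate (R := ℂ) (a := A * B)
            (U := (⟨U, hUmem⟩ : Matrix.unitaryGroup (Fin n) ℂ))
          simpa [Matrix.star_eq_conjTranspose] using h3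
  have hACspec : ∀ μ ∈ spectrum ℂ (A₁ * N.toBlocks₁₁), μ = 0 := by
    intro μ hμ
    by_contra h0
    have hmem := mem_spectrum_fromBlocks_of_mem_spectrum (A₁ * N.toBlocks₁₂) h0 hμ
    rw [hspec] at hmem
    exact h0 (h μ hmem)
  -- square root of A₁
  set R : Matrix (Fin s) (Fin s) ℂ :=
    Matrix.diagonal (fun k => (RCLike.ofReal (Real.sqrt (ev (e.symm (Sum.inl k)))) : ℂ)) with hR
  have hRR : R * R = A₁ := by
    rw [hR, hA₁, Matrix.diagonal_mul_diagonal]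
    refine congrArg Matrix.diagonal (funext fun i => ?_)
    rw [← RCLike.ofReal_mul, Real.mul_self_sqrt (hpos i).le]
  have hRH : Rᴴ = R := by
    rw [hR, Matrix.diagonal_conjTranspose]
    refine congrArg Matrix.diagonal (funext fun k => ?_)
    simp [Pi.star_apply, RCLike.star_def, RCLike.conj_ofReal]
  have hRdet : IsUnit R.det := by
    rw [hR, Matrix.det_diagonal, isUnit_iff_ne_zero]
    refine Finset.prod_ne_zero_iff.mpr fun k _ => ?_
    simpa using (Real.sqrt_ne_zero'.mpr (hpos k))
  have hRunit : IsUnit R := (Matrix.isUnit_iff_isUnit_det R).mpr hRdet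
  have hconj : A₁ * N.toBlocks₁₁ = (hRunit.unit : Matrix (Fin s) (Fin s) ℂ) *
      (R * N.toBlocks₁₁ * R) * ((hRunit.unit⁻¹ : (Matrix (Fin s) (Fin s) ℂ)ˣ) :
        Matrix (Fin s) (Fin s) ℂ) := by
    rw [Matrix.coe_units_inv, IsUnit.unit_spec, ← hRR]
    simp only [mul_assoc]
    rw [Matrix.mul_nonsing_inv _ hRdet, mul_one]
  have hRCRherm : (R * N.toBlocks₁₁ * R).IsHermitian := by
    show (R * N.toBlocks₁₁ * R)ᴴ = R * N.toBlocks₁₁ * R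
    rw [Matrix.conjTranspose_mul, Matrix.conjTranspose_mul, hRH, hCherm.eq, ← mul_assoc]
  have hRCR0 : R * N.toBlocks₁₁ * R = 0 := by
    apply herm_eq_zero_of_spectrum_zero hRCRherm
    intro μ hμ
    apply hACspec
    rw [hconj, spectrum.units_conjugate]
    exact hμ
  have hC0 : N.toBlocks₁₁ = 0 := by
    have h1 : N.toBlocks₁₁ = R⁻¹ * (R * N.toBlocks₁₁ * R) * R⁻¹ := by
      simp only [mul_assoc]
      rw [Matrix.mul_nonsing_inv _ hRdet, mul_one, ← mul_assoc,
        Matrix.nonsing_inv_mul _ hRdet, one_mul]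
    rw [h1, hRCR0, mul_zero, zero_mul]
  have hbblock : Matrix.reindex c.symm c.symm (U * B * Uᴴ) =
      Matrix.fromBlocks 0 N.toBlocks₁₂ (N.toBlocks₁₂)ᴴ N.toBlocks₂₂ := by
    rw [← hN]
    conv_lhs => rw [← N.fromBlocks_toBlocks]
    rw [hY, hC0]
  refine ⟨s, hs, U, hUmem, A₁, N.toBlocks₁₂, N.toBlocks₂₂, hA₁unit, ?_, ?_⟩
  · rw [← hc]
    exact hablock
  · rw [← hc]
    exact hbblock
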